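/- Let f : [a,b] → ℝ be convex, let x₁,…,xₙ ∈ [a,b], let μ₁,…,μₙ ≥ 0 with ∑μᵢ = 1, and let λ₁, λ₂ ≥ 0 with λ₁ + λ₂ = 1. If ∑μᵢxᵢ = λ₁a + λ₂b, then ∑μᵢ f(xᵢ) ≤ λ₁ f(a) + λ₂ f(b). -/

import Mathlib

theorem stmt_7 (a b : ℝ) (hab : a ≤ b) (f : ℝ → ℝ)
    (hconv : ∀ x ∈ Set.Icc a b, ∀ y ∈ Set.Icc a b, ∀ t ∈ Set.Icc (0:ℝ) 1,
      f (t * x + (1 - t) * y) ≤ t * f x + (1 - t) * f y)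
    (n : ℕ) (x : Fin n → ℝ) (hx : ∀ i, x i ∈ Set.Icc a b)
    (μ : Fin n → ℝ) (hμ : ∀ i, 0 ≤ μ i) (hμ1 : ∑ i, μ i = 1)
    (l₁ l₂ : ℝ) (hl₁ : 0 ≤ l₁) (hl₂ : 0 ≤ l₂) (hl : l₁ + l₂ = 1)
    (hbar : ∑ i, μ i * x i = l₁ * a + l₂ * b) :
    ∑ i, μ i * f (x i) ≤ l₁ * f a + l₂ * f b := by
  rcases eq_or_lt_of_le hab with heq | hlt
  · subst heq
    have hx' : ∀ i, x i = a := fun i => le_antisymm (hx i).2 (hx i).1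
    calc ∑ i, μ i * f (x i) = ∑ i, μ i * f a := by
          simp only [hx']
      _ = f a := by rw [← Finset.sum_mul, hμ1, one_mul]
      _ = l₁ * f a + l₂ * f a := by rw [← add_mul, hl, one_mul]
      _ ≤ l₁ * f a + l₂ * f a := le_refl _
  · have hba : (0:ℝ) < b - a := sub_pos.mpr hlt
    set t : Fin n → ℝ := fun i => (b - x i) / (b - a) with ht
    have hti : ∀ i, t i ∈ Set.Icc (0:ℝ) 1 := by
      intro i
      constructor
      · exact div_nonneg (sub_nonneg.mpr (hx i).2) hba.le
      · rw [ht, div_le_one hba]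
        have := (hx i).1; linarith
    have hrepr : ∀ i, t i * a + (1 - t i) * b = x i := by
      intro i
      simp only [ht]
      have hc : (b - x i) / (b - a) * (b - a) = b - x i := div_mul_cancel₀ _ hba.ne'
      linear_combination -hc
    have hchord : ∀ i, f (x i) ≤ t i * f a + (1 - t i) * f b := by
      intro i
      have := hconv a (Set.left_mem_Icc.mpr hab) b (Set.right_mem_Icc.mpr hab)
        (t i) (hti i)
      rwa [hrepr i] at this
    have hsum : ∑ i, μ i * f (x i) ≤ ∑ i, μ i * (t i * f a + (1 - t i) * f b) := by
      apply Finset.sum_le_sum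
      intro i _
      exact mul_le_mul_of_nonneg_left (hchord i) (hμ i)
    have hst : ∑ i, μ i * t i = l₁ := by
      have h1 : ∑ i, μ i * t i = (∑ i, (μ i * b - μ i * x i)) / (b - a) := by
        rw [Finset.sum_div]
        apply Finset.sum_congr rfl
        intro i _
        rw [ht]
        field_simp
      rw [h1, Finset.sum_sub_distrib, ← Finset.sum_mul, hμ1, hbar, one_mul]
      have hl2 : l₂ = 1 - l₁ := by linarith
      rw [hl2]
      field_simp
      ring
    have hfinal : ∑ i, μ i * (t i * f a + (1 - t i) * f b)
        = l₁ * f a + l₂ * f b := by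
      have h2 : ∑ i, μ i * (t i * f a + (1 - t i) * f b)
          = ∑ i, (μ i * t i * f a + (μ i - μ i * t i) * f b) := by
        apply Finset.sum_congr rfl
        intro i _
        ring
      rw [h2, Finset.sum_add_distrib, ← Finset.sum_mul, ← Finset.sum_mul,
        Finset.sum_sub_distrib, hst, hμ1]
      have hl2 : l₂ = 1 - l₁ := by linarith
      rw [hl2]
    linarith [hsum, hfinal.ge]
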